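/- If λ : ℝ → ℝ is differentiable on (0, R₀) with e^{λ(r)} > 1 and satisfies λ'(r)/(e^{λ(r)} − 1) = 2/r on (0, R₀), then there exists a constant R > 0 such that e^{λ(r)} = 1/(1 − r²/R²) for all r in (0, R₀). -/

import Mathlib

open Real Set

theorem lambda_ode_solution
    (R₀ : ℝ) (hR₀ : 0 < R₀) (g : ℝ → ℝ)
    (hg : DifferentiableOn ℝ g (Ioo 0 R₀))
    (hgt : ∀ r ∈ Ioo 0 R₀, 1 < Real.exp (g r))
    (hODE : ∀ r ∈ Ioo 0 R₀, deriv g r / (Real.exp (g r) - 1) = 2 / r) :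
    ∃ R : ℝ, 0 < R ∧ ∀ r ∈ Ioo 0 R₀, Real.exp (g r) = 1 / (1 - r ^ 2 / R ^ 2) := by
  set F : ℝ → ℝ := fun r => (1 - Real.exp (-g r)) / r ^ 2 with hFdef
  have hderiv : ∀ r ∈ Ioo 0 R₀, HasDerivAt F 0 r := by
    intro r hr
    have hr0 : 0 < r := hr.1
    have hga : DifferentiableAt ℝ g r := hg.differentiableAt (isOpen_Ioo.mem_nhds hr)
    have hg' : deriv g r = 2 / r * (Real.exp (g r) - 1) := by
      have hne : Real.exp (g r) - 1 ≠ 0 := by have := hgt r hr; linarith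
      have h := hODE r hr
      rw [div_eq_div_iff hne (ne_of_gt hr0)] at h
      field_simp
      linarith
    have h1 : HasDerivAt (fun x => 1 - Real.exp (-g x))
        (deriv g r * Real.exp (-g r)) r := by
      have h2 : HasDerivAt (fun x => Real.exp (-g x))
          (-deriv g r * Real.exp (-g r)) r := by
        have := (Real.hasDerivAt_exp (-g r)).comp r ((hga.hasDerivAt).neg)
        exact this.congr_deriv (by ring)
      have := (hasDerivAt_const r (1:ℝ)).sub h2
      exact this.congr_deriv (by ring)
    have h3 : HasDerivAt (fun x : ℝ => x ^ 2) (2 * r) r := by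
      simpa using hasDerivAt_pow 2 r
    have h4 := h1.div h3 (by positivity)
    refine h4.congr_deriv ?_
    rw [hg']
    have hexp : Real.exp (g r) * Real.exp (-g r) = 1 := by
      rw [← Real.exp_add]; simp
    field_simp
    nlinarith [Real.exp_pos (g r), Real.exp_pos (-g r)]
  have hFdiff : DifferentiableOn ℝ F (Ioo 0 R₀) :=
    fun r hr => ((hderiv r hr).differentiableAt).differentiableWithinAt
  have hconst : ∀ r ∈ Ioo 0 R₀, F r = F (R₀ / 2) := by
    intro r hr
    refine (convex_Ioo 0 R₀).is_const_of_fderivWithin_eq_zero hFdiff ?_ hr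
      (by constructor <;> [linarith [hr.1]; linarith [hr.2]] )
    · intro x hx
      have hfd : fderiv ℝ F x = 0 := by
        have := ((hderiv x hx).hasFDerivAt).fderiv
        rw [this]; ext; simp
      rw [fderivWithin_eq_fderiv (isOpen_Ioo.uniqueDiffWithinAt hx)
        ((hderiv x hx).differentiableAt), hfd]
  have hmid : R₀ / 2 ∈ Ioo 0 R₀ := ⟨by linarith, by linarith⟩
  set c : ℝ := F (R₀ / 2) with hc
  have hcpos : 0 < c := by
    have h1 : Real.exp (-g (R₀ / 2)) < 1 := by
      rw [Real.exp_lt_one_iff]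
      have := hgt _ hmid
      rw [show (1:ℝ) = Real.exp 0 by simp, Real.exp_lt_exp] at this
      linarith
    have : 0 < (R₀ / 2) ^ 2 := by positivity
    exact div_pos (by linarith) this
  refine ⟨Real.sqrt (1 / c), Real.sqrt_pos.mpr (by positivity), ?_⟩
  intro r hr
  have hR2 : Real.sqrt (1 / c) ^ 2 = 1 / c := Real.sq_sqrt (by positivity)
  rw [hR2]
  have hFr : (1 - Real.exp (-g r)) / r ^ 2 = c := hconst r hr
  have hr0 : (0:ℝ) < r := hr.1
  have h1 : 1 - Real.exp (-g r) = c * r ^ 2 := by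
    field_simp at hFr; linarith
  have hexp : Real.exp (g r) * Real.exp (-g r) = 1 := by
    rw [← Real.exp_add]; simp
  have hepos : 0 < Real.exp (-g r) := Real.exp_pos _
  have h2 : 1 - r ^ 2 / (1 / c) = Real.exp (-g r) := by
    rw [div_div_eq_mul_div, div_one]; linarith
  rw [h2, Real.exp_neg, one_div, inv_inv]
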